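/- For every even n ≥ 2, the map sending a partition λ of n (in which every odd part exceeds every even part) to λ ∪ {1} if λ has no even parts, and otherwise to the partition obtained by adding 1 to the largest even part of λ, is a bijection onto the set of partitions of n+1 in which every odd part exceeds every even part. -/

import Mathlib

/-- Every odd part is greater than every even part. -/
def oddAbove (l : Multiset ℕ) : Prop :=
  ∀ a ∈ l, ∀ b ∈ l, Odd a → Even b → b < a

/-- Every even part is greater than every odd part. -/
def evenAbove (l : Multiset ℕ) : Prop :=
  ∀ a ∈ l, ∀ b ∈ l, Even a → Odd b → b < a

/-- The odd parts are distinct. -/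
def oddDistinct (l : Multiset ℕ) : Prop :=
  ∀ a, Odd a → l.count a ≤ 1

/-- The even parts are distinct. -/
def evenDistinct (l : Multiset ℕ) : Prop :=
  ∀ a, Even a → l.count a ≤ 1

/-- The number of partitions of `n` whose multiset of parts satisfies `P`. -/
noncomputable def pcount (n : ℕ) (P : Multiset ℕ → Prop) : ℕ :=
  Nat.card {p : Nat.Partition n // P p.parts}

lemma sup_mem_of_ne_zero {m : Multiset ℕ} (h : m ≠ 0) : m.sup ∈ m := by
  induction m using Multiset.induction with
  | empty => simp at h
  | cons a s ih =>
    rcases eq_or_ne s 0 with rfl | hs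
    · simp
    · rw [Multiset.sup_cons]
      rcases le_total a s.sup with hle | hle
      · rw [sup_eq_right.mpr hle]; exact Multiset.mem_cons_of_mem (ih hs)
      · rw [sup_eq_left.mpr hle]; exact Multiset.mem_cons_self _ _

lemma even_sum_of_all_even (m : Multiset ℕ) : (∀ x ∈ m, Even x) → Even m.sum := by
  induction m using Multiset.induction with
  | empty => simp
  | cons a s ih =>
    intro hc
    rw [Multiset.sum_cons]
    exact (hc a (Multiset.mem_cons_self _ _)).add
      (ih (fun x hx => hc x (Multiset.mem_cons_of_mem hx)))

lemma exists_odd_of_odd_sum {m : Multiset ℕ} (h : Odd m.sum) : ∃ a ∈ m, Odd a := by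
  by_contra hc
  push_neg at hc
  simp only [Nat.not_odd_iff_even] at hc
  exact (Nat.not_odd_iff_even.mpr (even_sum_of_all_even m hc)) h

/-- The largest even part (0 if none). -/
def maxEven (l : Multiset ℕ) : ℕ := (l.filter (fun x => Even x)).sup

/-- The smallest odd part. -/
noncomputable def minOdd (l : Multiset ℕ) : ℕ := sInf {a | Odd a ∧ a ∈ l}

def psiM (l : Multiset ℕ) : Multiset ℕ :=
  if maxEven l = 0 then 1 ::ₘ l else (maxEven l + 1) ::ₘ l.erase (maxEven l)

noncomputable def phiM (l : Multiset ℕ) : Multiset ℕ :=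
  if minOdd l = 1 then l.erase 1 else (minOdd l - 1) ::ₘ l.erase (minOdd l)

lemma maxEven_eq_zero {l : Multiset ℕ} (h0 : 0 ∉ l) (he : maxEven l = 0) :
    ∀ x ∈ l, Odd x := by
  intro x hx
  rw [← Nat.not_even_iff_odd]
  intro hev
  have hmem : x ∈ l.filter (fun x => Even x) := Multiset.mem_filter.mpr ⟨hx, hev⟩
  have hle := Multiset.le_sup hmem
  unfold maxEven at he
  rw [he] at hle
  have hx0 : x = 0 := Nat.le_zero.mp hle
  exact h0 (hx0 ▸ hx)

lemma maxEven_spec {l : Multiset ℕ} (he : maxEven l ≠ 0) :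
    maxEven l ∈ l ∧ Even (maxEven l) ∧ ∀ b ∈ l, Even b → b ≤ maxEven l := by
  have hne : l.filter (fun x => Even x) ≠ 0 := by
    intro h; apply he; unfold maxEven; rw [h]; rfl
  have hmem := sup_mem_of_ne_zero hne
  rw [Multiset.mem_filter] at hmem
  exact ⟨hmem.1, hmem.2, fun b hb hbe =>
    Multiset.le_sup (Multiset.mem_filter.mpr ⟨hb, hbe⟩)⟩

lemma minOdd_spec {l : Multiset ℕ} (h : ∃ a ∈ l, Odd a) :
    minOdd l ∈ l ∧ Odd (minOdd l) ∧ ∀ a ∈ l, Odd a → minOdd l ≤ a := by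
  obtain ⟨a, ha, hao⟩ := h
  have hne : {a | Odd a ∧ a ∈ l}.Nonempty := ⟨a, hao, ha⟩
  have hmem := Nat.sInf_mem hne
  exact ⟨hmem.2, hmem.1, fun b hb hbo => Nat.sInf_le ⟨hbo, hb⟩⟩

lemma psiM_sum {l : Multiset ℕ} : (psiM l).sum = l.sum + 1 := by
  unfold psiM
  split
  · rw [Multiset.sum_cons]; omega
  · rename_i he
    obtain ⟨hmem, -, -⟩ := maxEven_spec he
    have h2 : maxEven l + (l.erase (maxEven l)).sum = l.sum := by
      rw [← Multiset.sum_cons, Multiset.cons_erase hmem]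
    rw [Multiset.sum_cons]
    omega

lemma psiM_pos {l : Multiset ℕ} (h0 : 0 ∉ l) : 0 ∉ psiM l := by
  unfold psiM
  split <;> intro hmem <;> rw [Multiset.mem_cons] at hmem
  · rcases hmem with h | h
    · exact absurd h.symm one_ne_zero
    · exact h0 h
  · rcases hmem with h | h
    · omega
    · exact h0 (Multiset.mem_of_mem_erase h)

lemma psiM_oddAbove {l : Multiset ℕ} (h0 : 0 ∉ l) (hOA : oddAbove l) :
    oddAbove (psiM l) := by
  unfold psiM
  split
  · rename_i he
    intro a ha b hb hao hbe
    rw [Multiset.mem_cons] at ha hb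
    rcases hb with rfl | hbl
    · simp [Nat.even_iff] at hbe
    · exact absurd hbe (Nat.not_even_iff_odd.mpr (maxEven_eq_zero h0 he b hbl))
  · rename_i he
    obtain ⟨hmem, heven, hmax⟩ := maxEven_spec he
    intro a ha b hb hao hbe
    rw [Multiset.mem_cons] at ha hb
    rcases hb with rfl | hb
    · rw [Nat.even_add_one] at hbe; exact absurd heven hbe
    have hbl : b ∈ l := Multiset.mem_of_mem_erase hb
    rcases ha with rfl | hal
    · have := hmax b hbl hbe; omega
    · exact hOA a (Multiset.mem_of_mem_erase hal) b hbl hao hbe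

lemma phiM_sum {l : Multiset ℕ} (h : ∃ a ∈ l, Odd a) : (phiM l).sum + 1 = l.sum := by
  obtain ⟨hmem, hodd, -⟩ := minOdd_spec h
  have hpos : 1 ≤ minOdd l := hodd.pos
  unfold phiM
  split
  · rename_i h1
    have h2 : (1 : ℕ) ∈ l := h1 ▸ hmem
    have : 1 + (l.erase 1).sum = l.sum := by
      rw [← Multiset.sum_cons, Multiset.cons_erase h2]
    omega
  · have h2 : minOdd l + (l.erase (minOdd l)).sum = l.sum := by
      rw [← Multiset.sum_cons, Multiset.cons_erase hmem]
    rw [Multiset.sum_cons]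
    omega

lemma phiM_pos {l : Multiset ℕ} (h0 : 0 ∉ l) (h : ∃ a ∈ l, Odd a) : 0 ∉ phiM l := by
  obtain ⟨hmem, hodd, -⟩ := minOdd_spec h
  unfold phiM
  split <;> intro hx
  · exact h0 (Multiset.mem_of_mem_erase hx)
  · rename_i h1
    rw [Multiset.mem_cons] at hx
    rcases hx with hx | hx
    · have := hodd.pos; omega
    · exact h0 (Multiset.mem_of_mem_erase hx)

lemma phiM_oddAbove {l : Multiset ℕ} (hOA : oddAbove l) (h : ∃ a ∈ l, Odd a) :
    oddAbove (phiM l) := by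
  obtain ⟨hmem, hodd, hmin⟩ := minOdd_spec h
  unfold phiM
  split
  · intro a ha b hb hao hbe
    exact hOA a (Multiset.mem_of_mem_erase ha) b (Multiset.mem_of_mem_erase hb) hao hbe
  · rename_i h1
    intro a ha b hb hao hbe
    rw [Multiset.mem_cons] at ha hb
    have hpos : 1 ≤ minOdd l := hodd.pos
    have hal : a ∈ l := by
      rcases ha with rfl | h
      · exfalso
        have : Even (minOdd l - 1) := by
          rcases hodd with ⟨k, hk⟩
          exact ⟨k, by omega⟩
        exact (Nat.not_even_iff_odd.mpr hao) this
      · exact Multiset.mem_of_mem_erase h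
    rcases hb with rfl | hbl
    · have := hmin a hal hao; omega
    · exact hOA a hal b (Multiset.mem_of_mem_erase hbl) hao hbe

lemma phiM_psiM {l : Multiset ℕ} (h0 : 0 ∉ l) (hOA : oddAbove l) :
    phiM (psiM l) = l := by
  unfold psiM
  split
  · rename_i he
    -- psiM l = 1 ::ₘ l, all parts odd
    have hall := maxEven_eq_zero h0 he
    have hodd1 : ∃ a ∈ (1 ::ₘ l), Odd a := ⟨1, Multiset.mem_cons_self _ _, odd_one⟩
    have hmin : minOdd (1 ::ₘ l) = 1 := by
      obtain ⟨hmem, hodd, hle⟩ := minOdd_spec hodd1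
      have := hle 1 (Multiset.mem_cons_self _ _) odd_one
      have := hodd.pos
      omega
    unfold phiM
    rw [hmin, if_pos rfl, Multiset.erase_cons_head]
  · rename_i he
    obtain ⟨hmem, heven, hmax⟩ := maxEven_spec he
    set e := maxEven l with hedef
    have hepos : 0 < e := Nat.pos_of_ne_zero he
    have heodd : Odd (e + 1) := Even.add_one heven
    have hodd1 : ∃ a ∈ ((e + 1) ::ₘ l.erase e), Odd a :=
      ⟨e + 1, Multiset.mem_cons_self _ _, heodd⟩
    have hmin : minOdd ((e + 1) ::ₘ l.erase e) = e + 1 := by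
      obtain ⟨hm, ho, hle⟩ := minOdd_spec hodd1
      have h1 := hle (e + 1) (Multiset.mem_cons_self _ _) heodd
      rw [Multiset.mem_cons] at hm
      rcases hm with h | h
      · omega
      · have := hOA _ (Multiset.mem_of_mem_erase h) e hmem ho heven
        omega
    have h2 : e ≥ 2 := by
      rcases heven with ⟨k, hk⟩; omega
    unfold phiM
    rw [hmin, if_neg (by omega), Multiset.erase_cons_head]
    have : e + 1 - 1 = e := by omega
    rw [this, Multiset.cons_erase hmem]

lemma psiM_phiM {l : Multiset ℕ} (h0 : 0 ∉ l) (hOA : oddAbove l)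
    (h : ∃ a ∈ l, Odd a) : psiM (phiM l) = l := by
  obtain ⟨hmem, hodd, hmin⟩ := minOdd_spec h
  unfold phiM
  split
  · rename_i h1
    -- no even parts in l
    have hnoeven : ∀ b ∈ l, ¬ Even b := by
      intro b hb hbe
      have := hOA 1 (h1 ▸ hmem) b hb odd_one hbe
      have : b = 0 := by omega
      exact h0 (this ▸ hb)
    have hme : maxEven (l.erase 1) = 0 := by
      unfold maxEven
      have : (l.erase 1).filter (fun x => Even x) = 0 := by
        rw [Multiset.eq_zero_iff_forall_notMem]
        intro x hx
        rw [Multiset.mem_filter] at hx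
        exact hnoeven x (Multiset.mem_of_mem_erase hx.1) hx.2
      rw [this]; rfl
    unfold psiM
    rw [hme, if_pos rfl, Multiset.cons_erase (h1 ▸ hmem)]
  · rename_i h1
    set o := minOdd l with hodef
    have h3 : 3 ≤ o := by
      rcases hodd with ⟨k, hk⟩; omega
    have hoe : Even (o - 1) := by rcases hodd with ⟨k, hk⟩; exact ⟨k, by omega⟩
    have hme : maxEven ((o - 1) ::ₘ l.erase o) = o - 1 := by
      have hne : maxEven ((o - 1) ::ₘ l.erase o) ≠ 0 := by
        intro hz
        have := maxEven_eq_zero (l := (o - 1) ::ₘ l.erase o) ?_ hz (o - 1)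
          (Multiset.mem_cons_self _ _)
        · exact (Nat.not_odd_iff_even.mpr hoe) this
        · intro hx
          rw [Multiset.mem_cons] at hx
          rcases hx with hx | hx
          · omega
          · exact h0 (Multiset.mem_of_mem_erase hx)
      obtain ⟨hm, he2, hmax⟩ := maxEven_spec hne
      have hub := hmax (o - 1) (Multiset.mem_cons_self _ _) hoe
      rw [Multiset.mem_cons] at hm
      rcases hm with h | h
      · omega
      · have := hOA o hmem _ (Multiset.mem_of_mem_erase h) hodd he2
        omega
    unfold psiM
    rw [hme, if_neg (by omega), Multiset.erase_cons_head]
    have : o - 1 + 1 = o := by omega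
    rw [this, Multiset.cons_erase hmem]

theorem stmt17 (n : ℕ) (hn : 2 ≤ n) (hne : Even n) :
    ∃ ψ : {p : Nat.Partition n // oddAbove p.parts} →
        {p : Nat.Partition (n + 1) // oddAbove p.parts},
      Function.Bijective ψ ∧
        ∀ p : {p : Nat.Partition n // oddAbove p.parts},
          ((∀ a ∈ p.1.parts, Odd a) → (ψ p).1.parts = 1 ::ₘ p.1.parts) ∧
          (∀ e ∈ p.1.parts, Even e → (∀ b ∈ p.1.parts, Even b → b ≤ e) →
            (ψ p).1.parts = (e + 1) ::ₘ p.1.parts.erase e) := by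
  have hzero : ∀ (m : ℕ) (p : Nat.Partition m), (0 : ℕ) ∉ p.parts := by
    intro m p h
    exact absurd (p.parts_pos h) (lt_irrefl 0)
  refine ⟨fun p => ⟨⟨psiM p.1.parts, ?_, ?_⟩,
      psiM_oddAbove (hzero n p.1) p.2⟩, ?_, ?_⟩
  · intro i hi
    cases Nat.eq_zero_or_pos i with
    | inl h => exact absurd (h ▸ hi) (psiM_pos (hzero n p.1))
    | inr h => exact h
  · rw [psiM_sum, p.1.parts_sum]
  · -- bijectivity
    have hoddpart : ∀ p : Nat.Partition (n + 1), ∃ a ∈ p.parts, Odd a := by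
      intro p
      apply exists_odd_of_odd_sum
      rw [p.parts_sum]
      exact Even.add_one hne
    refine Function.bijective_iff_has_inverse.mpr
      ⟨fun q => ⟨⟨phiM q.1.parts, ?_, ?_⟩,
        phiM_oddAbove q.2 (hoddpart q.1)⟩, ?_, ?_⟩
    · intro i hi
      cases Nat.eq_zero_or_pos i with
      | inl h =>
        exact absurd (h ▸ hi) (phiM_pos (hzero _ q.1) (hoddpart q.1))
      | inr h => exact h
    · have := phiM_sum (hoddpart q.1)
      rw [q.1.parts_sum] at this
      omega
    · intro p
      apply Subtype.ext
      apply Nat.Partition.ext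
      exact phiM_psiM (hzero n p.1) p.2
    · intro q
      apply Subtype.ext
      apply Nat.Partition.ext
      exact psiM_phiM (hzero _ q.1) q.2 (hoddpart q.1)
  · -- specification
    intro p
    constructor
    · intro hall
      show psiM p.1.parts = _
      have he : maxEven p.1.parts = 0 := by
        unfold maxEven
        have : p.1.parts.filter (fun x => Even x) = 0 := by
          rw [Multiset.eq_zero_iff_forall_notMem]
          intro x hx
          rw [Multiset.mem_filter] at hx
          exact (Nat.not_even_iff_odd.mpr (hall x hx.1)) hx.2
        rw [this]; rfl
      unfold psiM
      rw [he, if_pos rfl]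
    · intro e he hev hmax
      show psiM p.1.parts = _
      have hne : maxEven p.1.parts ≠ 0 := by
        intro hz
        exact (Nat.not_even_iff_odd.mpr (maxEven_eq_zero (hzero n p.1) hz e he)) hev
      obtain ⟨hm, hme, hmx⟩ := maxEven_spec hne
      have heq : maxEven p.1.parts = e :=
        le_antisymm (hmax _ hm hme) (hmx e he hev)
      unfold psiM
      rw [if_neg hne, heq]
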